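/- The difference of the two input-average states satisfies ρ₀ − ρ₁ = (1/(2√2))·(|Ψ⁺⟩⟨Ψ⁺| − |Ψ⁻⟩⟨Ψ⁻|); in particular, every eigenvector of ρ₀ − ρ₁ with nonzero eigenvalue is a maximally entangled Bell state. -/

import Mathlib

open Matrix Complex Kronecker BigOperators ComplexOrder

noncomputable section

abbrev Mat2 := Matrix (Fin 2) (Fin 2) ℂ
abbrev Mat4 := Matrix (Fin 2 × Fin 2) (Fin 2 × Fin 2) ℂ

/-- Pauli X matrix -/
def PX : Mat2 := !![0, 1; 1, 0]

/-- Pauli Y matrix -/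
def PY : Mat2 := !![0, -Complex.I; Complex.I, 0]

/-- sign (−1)^b for a bit b -/
def bsign (b : Bool) : ℂ := if b then -1 else 1

/-- boolean function f(x̄,ȳ) = (x₁·y₁) XOR x₂ XOR y₂ -/
def fxy (x y : Bool × Bool) : Bool := (((x.1 && y.1)).xor x.2).xor y.2

/-- qubit input states ω_{x̄}: ω_{(0,x₂)} = (I+(−1)^{x₂}X)/2, ω_{(1,x₂)} = (I+(−1)^{x₂}Y)/2 -/
def omg (x : Bool × Bool) : Mat2 :=
  (1/2 : ℂ) • ((1 : Mat2) + bsign x.2 • (if x.1 then PY else PX))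

/-- qubit input states τ_{ȳ} = (I+(−1)^{y₂}(X+(−1)^{y₁}Y)/√2)/2 -/
def tau (y : Bool × Bool) : Mat2 :=
  (1/2 : ℂ) • ((1 : Mat2) + (bsign y.2 / (Real.sqrt 2 : ℂ)) • (PX + bsign y.1 • PY))

/-- averaged input states ρ₀ (for c = false) and ρ₁ (for c = true) -/
def rho (c : Bool) : Mat4 :=
  (1/8 : ℂ) • ∑ x : Bool × Bool, ∑ y : Bool × Bool,
    (if fxy x y = c then omg x ⊗ₖ tau y else 0)

/-- standard basis vectors of ℂ⁴ ≅ ℂ² ⊗ ℂ² -/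
def ket (i j : Fin 2) : (Fin 2 × Fin 2) → ℂ := fun p => if p = (i, j) then 1 else 0

def PhiP : (Fin 2 × Fin 2) → ℂ := fun p => (1 / (Real.sqrt 2 : ℂ)) * (ket 0 0 p + ket 1 1 p)
def PhiM : (Fin 2 × Fin 2) → ℂ := fun p => (1 / (Real.sqrt 2 : ℂ)) * (ket 0 0 p - ket 1 1 p)
def PsiP : (Fin 2 × Fin 2) → ℂ := fun p => (1 / (Real.sqrt 2 : ℂ)) * (ket 0 1 p + ket 1 0 p)
def PsiM : (Fin 2 × Fin 2) → ℂ := fun p => (1 / (Real.sqrt 2 : ℂ)) * (ket 0 1 p - ket 1 0 p)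

/-- rank one projector |v⟩⟨v| -/
def proj (v : (Fin 2 × Fin 2) → ℂ) : Mat4 := Matrix.vecMulVec v (star v)

/-- a γ-admissible measurement triple -/
def Admissible (γ : ℝ) (P0 P1 Pe : Mat4) : Prop :=
  P0.PosSemidef ∧ P1.PosSemidef ∧ Pe.PosSemidef ∧
  P0 + P1 + Pe = 1 ∧
  ∀ x y : Bool × Bool, ((omg x ⊗ₖ tau y) * Pe).trace = 1 - (γ : ℂ)^2

/-- guessing value V = (1/2)·Tr[ρ₀Π₀ + ρ₁Π₁] (a real number) -/
def Gval (P0 P1 : Mat4) : ℝ := (1/2) * ((rho false * P0 + rho true * P1).trace).re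

set_option maxHeartbeats 4000000 in
lemma key : rho false - rho true = (1/(2*Real.sqrt 2) : ℝ) • (proj PsiP - proj PsiM) := by
  have h2 : (Real.sqrt 2 : ℂ) * (Real.sqrt 2 : ℂ) = 2 := by
    rw [← Complex.ofReal_mul, Real.mul_self_sqrt (by norm_num : (0:ℝ) ≤ 2)]; norm_num
  have h0 : (Real.sqrt 2 : ℂ) ≠ 0 := by
    intro h; rw [h, mul_zero] at h2; norm_num at h2
  have hp2 : (Real.sqrt 2 : ℂ) ^ 2 = 2 := by rw [sq, h2]
  have h4 : (Real.sqrt 2 : ℂ) ^ 4 = 4 := by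
    rw [show (Real.sqrt 2 : ℂ) ^ 4 = ((Real.sqrt 2 : ℂ) ^ 2) ^ 2 by ring, hp2]; norm_num
  have h6 : (Real.sqrt 2 : ℂ) ^ 6 = 8 := by
    rw [show (Real.sqrt 2 : ℂ) ^ 6 = ((Real.sqrt 2 : ℂ) ^ 2) ^ 3 by ring, hp2]; norm_num
  ext ⟨i, j⟩ ⟨k, l⟩
  fin_cases i <;> fin_cases j <;> fin_cases k <;> fin_cases l <;>
  · simp only [rho, Fintype.sum_prod_type, Fintype.sum_bool, fxy, omg, tau, bsign,
      kroneckerMap_apply, proj, vecMulVec, Pi.star_apply, PsiP, PsiM, ket, PX, PY]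
    norm_num [Matrix.sub_apply, Matrix.smul_apply, Matrix.add_apply, Matrix.one_apply,
      Prod.ext_iff, map_add, map_sub, _root_.map_mul, map_div₀, Complex.conj_ofReal]
    try field_simp
    try ring_nf
    try simp [pow_succ, h2]
    try ring_nf
    try simp [h2]
    try (rw [h6, h4]; ring)
    try norm_num
    try (rw [hp2]; norm_num)

/-- ρ₀ − ρ₁ = (1/(2√2))·(|Ψ⁺⟩⟨Ψ⁺| − |Ψ⁻⟩⟨Ψ⁻|); in particular every
eigenvector with nonzero eigenvalue is (proportional to) a maximally entangled Bell state. -/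
theorem rho_difference :
    rho false - rho true = (1/(2*Real.sqrt 2) : ℝ) • (proj PsiP - proj PsiM) ∧
    ∀ (v : (Fin 2 × Fin 2) → ℂ) (μ : ℂ), μ ≠ 0 → v ≠ 0 →
      (rho false - rho true).mulVec v = μ • v →
      (∃ c : ℂ, v = c • PsiP) ∨ (∃ c : ℂ, v = c • PsiM) := by
  refine ⟨key, ?_⟩
  intro v μ hμ hv heig
  set s : ℂ := ((1/(2*Real.sqrt 2) : ℝ) : ℂ) with hs
  have h2 : (Real.sqrt 2 : ℂ) * (Real.sqrt 2 : ℂ) = 2 := by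
    rw [← Complex.ofReal_mul, Real.mul_self_sqrt (by norm_num : (0:ℝ) ≤ 2)]; norm_num
  have h0 : (Real.sqrt 2 : ℂ) ≠ 0 := by
    intro h; rw [h, mul_zero] at h2; norm_num at h2
  have hs0 : s ≠ 0 := by
    simp only [hs, ne_eq, Complex.ofReal_eq_zero]
    positivity
  rw [key] at heig
  have e00 := congrFun heig (0,0)
  have e01 := congrFun heig (0,1)
  have e10 := congrFun heig (1,0)
  have e11 := congrFun heig (1,1)
  simp only [Matrix.mulVec, dotProduct, Fintype.sum_prod_type, Fin.sum_univ_two,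
    Matrix.smul_apply, Matrix.sub_apply, proj, vecMulVec, Pi.star_apply, PsiP, PsiM, ket,
    Pi.smul_apply, smul_eq_mul, Prod.ext_iff, map_add, map_sub, _root_.map_mul, map_div₀,
    Complex.conj_ofReal, _root_.map_one] at e00 e01 e10 e11
  norm_num at e00 e01 e10 e11
  have ha : ((Real.sqrt 2:ℂ)⁻¹ * (1 / 2) * ((Real.sqrt 2:ℂ)⁻¹ * (Real.sqrt 2:ℂ)⁻¹)
      + (Real.sqrt 2:ℂ)⁻¹ * (1 / 2) * ((Real.sqrt 2:ℂ)⁻¹ * (Real.sqrt 2:ℂ)⁻¹)) ≠ 0 := by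
    have : ((Real.sqrt 2:ℂ)⁻¹ * (1 / 2) * ((Real.sqrt 2:ℂ)⁻¹ * (Real.sqrt 2:ℂ)⁻¹)
      + (Real.sqrt 2:ℂ)⁻¹ * (1 / 2) * ((Real.sqrt 2:ℂ)⁻¹ * (Real.sqrt 2:ℂ)⁻¹))
        = ((Real.sqrt 2:ℂ)⁻¹)^3 := by ring
    rw [this]
    exact pow_ne_zero _ (inv_ne_zero h0)
  set a : ℂ := ((Real.sqrt 2:ℂ)⁻¹ * (1 / 2) * ((Real.sqrt 2:ℂ)⁻¹ * (Real.sqrt 2:ℂ)⁻¹)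
      + (Real.sqrt 2:ℂ)⁻¹ * (1 / 2) * ((Real.sqrt 2:ℂ)⁻¹ * (Real.sqrt 2:ℂ)⁻¹)) with hadef
  have hv00 : v (0,0) = 0 := e00.resolve_left hμ
  have hv11 : v (1,1) = 0 := e11.resolve_left hμ
  have hv00' : v 0 = 0 := hv00
  have hv11' : v 1 = 0 := hv11
  by_cases hc : v (0,1) = 0
  · exfalso
    have hv10 : v (1,0) = 0 := by
      have := e10
      rw [hc, mul_zero] at this
      rcases mul_eq_zero.mp this.symm with h | h
      · exact absurd h hμ
      · exact h
    apply hv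
    funext p
    obtain ⟨i, j⟩ := p
    fin_cases i <;> fin_cases j <;> simpa using by assumption
  · have hmu2 : (μ - a) * (μ + a) * v (0,1) = 0 := by
      linear_combination -μ * e01 - a * e10
    rcases mul_eq_zero.mp hmu2 with h | h
    · rcases mul_eq_zero.mp h with h | h
      · have hμa : μ = a := sub_eq_zero.mp h
        left
        refine ⟨Real.sqrt 2 * v (0,1), ?_⟩
        have hv10 : v (1,0) = v (0,1) := by
          have h' := e10
          rw [hμa] at h'
          exact (mul_left_cancel₀ ha h').symm
        funext p
        obtain ⟨i, j⟩ := p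
        fin_cases i <;> fin_cases j <;>
          · simp only [Pi.smul_apply, smul_eq_mul, PsiP, ket, Prod.ext_iff]
            norm_num [hv00, hv11, hv00', hv11', hv10]
            try field_simp
      · have hμa : μ = -a := eq_neg_of_add_eq_zero_left h
        right
        refine ⟨Real.sqrt 2 * v (0,1), ?_⟩
        have hv10 : v (1,0) = -v (0,1) := by
          have h' := e10
          rw [hμa] at h'
          have h'' : a * v (0,1) = a * (-v (1,0)) := by linear_combination h'
          have := mul_left_cancel₀ ha h''
          linear_combination this
        funext p
        obtain ⟨i, j⟩ := p
        fin_cases i <;> fin_cases j <;>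
          · simp only [Pi.smul_apply, smul_eq_mul, PsiM, ket, Prod.ext_iff]
            norm_num [hv00, hv11, hv00', hv11', hv10]
            try field_simp
    · exact absurd h hc
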